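/- For agents with identical monotone valuations on a path, there exists a connected complete allocation that is envy-free up to one good (EF1). -/

import Mathlib

open Finset

/-- A set of goods on a path (goods indexed by `Fin m`) is connected iff it is an interval. -/
def IsIvl {m : ℕ} (S : Finset (Fin m)) : Prop :=
  ∀ ⦃a b c : Fin m⦄, a ∈ S → c ∈ S → a ≤ b → b ≤ c → b ∈ S

/-- A connected allocation on a path: each agent gets an interval, intervals pairwise disjoint. -/
structure Alloc (n m : ℕ) where
  bundle : Fin n → Finset (Fin m)
  connected : ∀ i, IsIvl (bundle i)
  disj : ∀ i k, i ≠ k → Disjoint (bundle i) (bundle k)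

/-- Complete: every good is assigned. -/
def Alloc.Complete {n m : ℕ} (A : Alloc n m) : Prop :=
  ∀ v : Fin m, ∃ i, v ∈ A.bundle i

/-- Additive utility from per-good values. -/
def util {n m : ℕ} (val : Fin n → Fin m → ℕ) (i : Fin n) (S : Finset (Fin m)) : ℕ :=
  ∑ j ∈ S, val i j

/-- Non-wasteful: every good is assigned to an agent who values it at 1. -/
def NonWasteful {n m : ℕ} (val : Fin n → Fin m → ℕ) (A : Alloc n m) : Prop :=
  ∀ v : Fin m, ∃ i, v ∈ A.bundle i ∧ val i v = 1

/-- Pareto optimal among connected allocations. -/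
def ParetoOptimal {n m : ℕ} (val : Fin n → Fin m → ℕ) (A : Alloc n m) : Prop :=
  ¬ ∃ B : Alloc n m,
      (∀ i, util val i (A.bundle i) ≤ util val i (B.bundle i)) ∧
      (∃ i, util val i (A.bundle i) < util val i (B.bundle i))

/-- Equitability up to one good, for general (set-function) utilities. -/
def EQ1 {n m : ℕ} (u : Fin n → Finset (Fin m) → ℕ) (A : Alloc n m) : Prop :=
  ∀ i k, (A.bundle k).Nonempty →
    ∃ v ∈ A.bundle k, u k (A.bundle k \ {v}) ≤ u i (A.bundle i)

/-- σ-consistency: bundles appear left to right along the path in the order σ. -/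
def Consistent {n m : ℕ} (σ : Equiv.Perm (Fin n)) (A : Alloc n m) : Prop :=
  ∀ i k : Fin n, i < k → ∀ x ∈ A.bundle (σ i), ∀ y ∈ A.bundle (σ k), x < y

namespace EQ1Aux

/-- distance on ℕ -/
def dst (a b : ℕ) : ℕ := (a - b) + (b - a)

/-- the bundle of agent `j` determined by the cut vector `c`. -/
def cb (m : ℕ) (c : ℕ → ℕ) (j : ℕ) : Finset (Fin m) :=
  univ.filter (fun x => c j ≤ x.val ∧ x.val < c (j + 1))

lemma mem_cb {m : ℕ} {c : ℕ → ℕ} {j : ℕ} {x : Fin m} :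
    x ∈ cb m c j ↔ c j ≤ x.val ∧ x.val < c (j + 1) := by simp [cb]

lemma isIvl_cb {m : ℕ} (c : ℕ → ℕ) (j : ℕ) : IsIvl (cb m c j) := by
  intro a b d ha hd hab hbd
  rw [mem_cb] at *
  exact ⟨le_trans ha.1 hab, lt_of_le_of_lt hbd hd.2⟩

lemma isIvl_univ {m : ℕ} : IsIvl (univ : Finset (Fin m)) := by
  intro a b d _ _ _ _; exact mem_univ b

/-- valid cut vectors -/
def Valid (n m : ℕ) (c : ℕ → ℕ) : Prop := Monotone c ∧ c 0 = 0 ∧ c n = m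

def fne (n : ℕ) [NeZero n] : (univ : Finset (Fin n)).Nonempty :=
  ⟨⟨0, Nat.pos_of_ne_zero (NeZero.ne n)⟩, mem_univ _⟩

/-- minimum bundle value -/
def mu (n : ℕ) {m : ℕ} [NeZero n] (u : Finset (Fin m) → ℕ) (c : ℕ → ℕ) : ℕ :=
  (univ : Finset (Fin n)).inf' (fne n) (fun j => u (cb m c j.val))

/-- set of minimum bundles -/
def mins (n : ℕ) {m : ℕ} [NeZero n] (u : Finset (Fin m) → ℕ) (c : ℕ → ℕ) : Finset (Fin n) :=
  univ.filter (fun j => u (cb m c j.val) = mu n u c)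

lemma mu_le (n : ℕ) {m : ℕ} [NeZero n] (u : Finset (Fin m) → ℕ) (c : ℕ → ℕ) (j : Fin n) :
    mu n u c ≤ u (cb m c j.val) :=
  Finset.inf'_le _ (mem_univ j)

lemma mins_nonempty (n : ℕ) {m : ℕ} [NeZero n] (u : Finset (Fin m) → ℕ) (c : ℕ → ℕ) :
    (mins n u c).Nonempty := by
  obtain ⟨j, _, hje⟩ := Finset.exists_mem_eq_inf' (fne n) (fun j : Fin n => u (cb m c j.val))
  exact ⟨j, by simp only [mins, Finset.mem_filter]; exact ⟨mem_univ _, hje.symm⟩⟩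

/-- weighted distance potential relative to bundle `j` -/
def Phi (m : ℕ) {n : ℕ} (c : ℕ → ℕ) (j : Fin n) : ℕ :=
  ∑ l : Fin n, (cb m c l.val).card * dst l.val j.val

def DD (n m : ℕ) [NeZero n] (u : Finset (Fin m) → ℕ) (c : ℕ → ℕ) : ℕ :=
  (mins n u c).inf' (mins_nonempty n u c) (Phi m c)

/-- the global potential -/
def Psi (n : ℕ) {m : ℕ} [NeZero n] (u : Finset (Fin m) → ℕ) (c : ℕ → ℕ) : ℕ :=
  ((u univ - mu n u c) * (n + 1) + (mins n u c).card) * (n * (m * n) + 1) + DD n m u c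

lemma card_mins_le (n : ℕ) {m : ℕ} [NeZero n] (u : Finset (Fin m) → ℕ) (c : ℕ → ℕ) :
    (mins n u c).card ≤ n :=
  le_trans (Finset.card_filter_le _ _) (by simp)

lemma dst_le {n : ℕ} (l j : Fin n) : dst l.val j.val ≤ n := by
  have h1 := l.isLt; have h2 := j.isLt
  unfold dst; omega

lemma Phi_le {n m : ℕ} (c : ℕ → ℕ) (j : Fin n) : Phi m c j ≤ n * (m * n) := by
  unfold Phi
  calc ∑ l : Fin n, (cb m c l.val).card * dst l.val j.val
      ≤ ∑ _l : Fin n, m * n := by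
        apply Finset.sum_le_sum
        intro l _
        apply Nat.mul_le_mul
        · exact le_trans (Finset.card_filter_le _ _) (by simp)
        · exact dst_le l j
    _ = n * (m * n) := by simp [mul_comm]

lemma DD_le (n m : ℕ) [NeZero n] (u : Finset (Fin m) → ℕ) (c : ℕ → ℕ) :
    DD n m u c ≤ n * (m * n) := by
  obtain ⟨j, hj, hje⟩ := Finset.exists_mem_eq_inf' (mins_nonempty n u c) (Phi m c)
  rw [DD]
  rw [hje]
  exact Phi_le c j

lemma mu_le_top (n : ℕ) {m : ℕ} [NeZero n] (u : Finset (Fin m) → ℕ)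
    (hmono : ∀ S S', IsIvl S → IsIvl S' → S ⊆ S' → u S ≤ u S')
    (c : ℕ → ℕ) : mu n u c ≤ u univ := by
  obtain ⟨j, _, hje⟩ := Finset.exists_mem_eq_inf' (fne n) (fun j : Fin n => u (cb m c j.val))
  rw [mu, hje]
  exact hmono _ _ (isIvl_cb _ _) isIvl_univ (subset_univ _)

/- arithmetic lemmas for the lexicographic potential -/
lemma psiA {N M a a' b b' d d' : ℕ} (hb' : b' ≤ N) (hd' : d' ≤ M) (ha : a' < a) :
    (a' * (N + 1) + b') * (M + 1) + d' < (a * (N + 1) + b) * (M + 1) + d := by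
  have h1 : (a' * (N + 1) + b') * (M + 1) + d' < (a' * (N + 1) + b' + 1) * (M + 1) := by
    have : (a' * (N + 1) + b' + 1) * (M + 1) = (a' * (N + 1) + b') * (M + 1) + (M + 1) := by ring
    omega
  have h2 : a' * (N + 1) + b' + 1 ≤ a * (N + 1) + b := by
    have h3 : (a' + 1) * (N + 1) ≤ a * (N + 1) := Nat.mul_le_mul_right _ ha
    have h4 : (a' + 1) * (N + 1) = a' * (N + 1) + N + 1 := by ring
    omega
  have h5 : (a' * (N + 1) + b' + 1) * (M + 1) ≤ (a * (N + 1) + b) * (M + 1) :=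
    Nat.mul_le_mul_right _ h2
  omega

lemma psiB {N M a b b' d d' : ℕ} (hd' : d' ≤ M) (hb : b' < b) :
    (a * (N + 1) + b') * (M + 1) + d' < (a * (N + 1) + b) * (M + 1) + d := by
  have h1 : (a * (N + 1) + b') * (M + 1) + d' < (a * (N + 1) + b' + 1) * (M + 1) := by
    have : (a * (N + 1) + b' + 1) * (M + 1) = (a * (N + 1) + b') * (M + 1) + (M + 1) := by ring
    omega
  have h2 : (a * (N + 1) + b' + 1) * (M + 1) ≤ (a * (N + 1) + b) * (M + 1) :=
    Nat.mul_le_mul_right _ (by omega)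
  omega

/-- moving one good from bundle `k` to bundle `k'` changes `Phi` in a controlled way. -/
lemma phi_move {n m : ℕ} (c c' : ℕ → ℕ) (k k' : Fin n) (g : Fin m) (hkk' : k ≠ k')
    (h1 : ∀ l : Fin n, l ≠ k → l ≠ k' → cb m c' l.val = cb m c l.val)
    (hg : g ∈ cb m c k.val)
    (h2 : cb m c' k.val = cb m c k.val \ {g})
    (hg' : g ∉ cb m c k'.val)
    (h3 : cb m c' k'.val = insert g (cb m c k'.val))
    (j : Fin n) :
    Phi m c' j + dst k.val j.val = Phi m c j + dst k'.val j.val := by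
  classical
  have hck : (cb m c' k.val).card + 1 = (cb m c k.val).card := by
    have hpos : 1 ≤ (cb m c k.val).card := Finset.card_pos.mpr ⟨g, hg⟩
    rw [h2, Finset.sdiff_singleton_eq_erase, Finset.card_erase_of_mem hg]
    omega
  have hck' : (cb m c' k'.val).card = (cb m c k'.val).card + 1 := by
    rw [h3, Finset.card_insert_of_notMem hg']
  have hk'mem : k' ∈ (univ : Finset (Fin n)).erase k := by
    simp [Finset.mem_erase, (Ne.symm hkk')]
  have key : ∀ f : Fin n → ℕ,
      ∑ l, f l = ∑ l ∈ ((univ : Finset (Fin n)).erase k).erase k', f l + f k' + f k := by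
    intro f
    rw [Finset.sum_erase_add _ _ hk'mem, Finset.sum_erase_add _ _ (mem_univ k)]
  unfold Phi
  rw [key (fun l => (cb m c' l.val).card * dst l.val j.val),
      key (fun l => (cb m c l.val).card * dst l.val j.val)]
  have hbase : ∑ l ∈ ((univ : Finset (Fin n)).erase k).erase k',
        (cb m c' l.val).card * dst l.val j.val
      = ∑ l ∈ ((univ : Finset (Fin n)).erase k).erase k',
        (cb m c l.val).card * dst l.val j.val := by
    apply Finset.sum_congr rfl
    intro l hl
    rw [Finset.mem_erase, Finset.mem_erase] at hl
    rw [h1 l hl.2.1 hl.1]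
  rw [hbase]
  have e1 : (cb m c' k'.val).card * dst k'.val j.val
      = (cb m c k'.val).card * dst k'.val j.val + dst k'.val j.val := by
    rw [hck', add_one_mul]
  have e2 : (cb m c' k.val).card * dst k.val j.val + dst k.val j.val
      = (cb m c k.val).card * dst k.val j.val := by
    rw [← hck, add_one_mul]
  omega

/-- the abstract "one move" lemma: the potential strictly decreases. -/
lemma psi_lt_of_move {n m : ℕ} [NeZero n] (u : Finset (Fin m) → ℕ)
    (hmono : ∀ S S', IsIvl S → IsIvl S' → S ⊆ S' → u S ≤ u S')
    (c c' : ℕ → ℕ) (k k' istar : Fin n) (g : Fin m)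
    (hkk' : k ≠ k')
    (h1 : ∀ l : Fin n, l ≠ k → l ≠ k' → cb m c' l.val = cb m c l.val)
    (hg : g ∈ cb m c k.val)
    (h2 : cb m c' k.val = cb m c k.val \ {g})
    (hg' : g ∉ cb m c k'.val)
    (h3 : cb m c' k'.val = insert g (cb m c k'.val))
    (h4 : mu n u c < u (cb m c' k.val))
    (histar : istar ∈ mins n u c)
    (hD : Phi m c istar = DD n m u c)
    (hdst : dst k'.val istar.val < dst k.val istar.val) :
    Psi n u c' < Psi n u c := by
  classical
  have hsub' : cb m c k'.val ⊆ cb m c' k'.val := by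
    rw [h3]; exact Finset.subset_insert _ _
  have hvk' : u (cb m c k'.val) ≤ u (cb m c' k'.val) :=
    hmono _ _ (isIvl_cb _ _) (isIvl_cb _ _) hsub'
  have hlow : ∀ l : Fin n, mu n u c ≤ u (cb m c' l.val) := by
    intro l
    by_cases hlk : l = k
    · subst hlk; exact h4.le
    by_cases hlk' : l = k'
    · subst hlk'; exact le_trans (mu_le n u c l) hvk'
    · rw [h1 l hlk hlk']; exact mu_le n u c l
  have hmumu : mu n u c ≤ mu n u c' :=
    Finset.le_inf' _ _ (fun j _ => hlow j)
  rcases hmumu.lt_or_eq with hlt | heq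
  · -- the minimum strictly increased
    have htop : mu n u c' ≤ u univ := mu_le_top n u hmono c'
    unfold Psi
    exact psiA (card_mins_le n u c') (DD_le n m u c') (by omega)
  · -- the minimum is unchanged
    have hminsub : mins n u c' ⊆ mins n u c := by
      intro j hj
      simp only [mins, Finset.mem_filter] at hj ⊢
      refine ⟨mem_univ _, ?_⟩
      have hjv : u (cb m c' j.val) = mu n u c := by rw [hj.2, ← heq]
      by_cases hjk : j = k
      · exfalso
        rw [hjk] at hjv
        omega
      by_cases hjk' : j = k'
      · have h5 : mu n u c ≤ u (cb m c j.val) := mu_le n u c j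
        have h7 : u (cb m c j.val) ≤ u (cb m c' j.val) := by
          rw [hjk']; exact hvk'
        omega
      · rw [h1 j hjk hjk'] at hjv; exact hjv
    have hcard : (mins n u c').card ≤ (mins n u c).card := Finset.card_le_card hminsub
    rcases hcard.lt_or_eq with hclt | hceq
    · unfold Psi
      rw [← heq]
      exact psiB (DD_le n m u c') hclt
    · have hept : mins n u c' = mins n u c :=
        Finset.eq_of_subset_of_card_le hminsub hceq.ge
      have histar' : istar ∈ mins n u c' := by rw [hept]; exact histar
      have hphi : Phi m c' istar + dst k.val istar.val
          = Phi m c istar + dst k'.val istar.val :=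
        phi_move c c' k k' g hkk' h1 hg h2 hg' h3 istar
      have h6 : DD n m u c' ≤ Phi m c' istar := Finset.inf'_le _ histar'
      have hDlt : DD n m u c' < DD n m u c := by omega
      unfold Psi
      rw [← heq, hept]
      exact Nat.add_lt_add_left hDlt _

/-- left-push move: the violating bundle `k` is strictly to the right of `istar`. -/
lemma move_left {n m : ℕ} [NeZero n] (u : Finset (Fin m) → ℕ)
    (hmono : ∀ S S', IsIvl S → IsIvl S' → S ⊆ S' → u S ≤ u S')
    (c : ℕ → ℕ) (hc : Valid n m c)
    (k istar : Fin n) (hik : istar.val < k.val)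
    (hknon : (cb m c k.val).Nonempty)
    (hviol : ∀ v ∈ cb m c k.val, mu n u c < u (cb m c k.val \ {v}))
    (histar : istar ∈ mins n u c) (hD : Phi m c istar = DD n m u c) :
    ∃ c'', Valid n m c'' ∧ Psi n u c'' < Psi n u c := by
  classical
  obtain ⟨x, hx⟩ := hknon
  rw [mem_cb] at hx
  have hckm : c k.val < m := lt_of_le_of_lt hx.1 x.isLt
  have hkk1 : c k.val < c (k.val + 1) := lt_of_le_of_lt hx.1 hx.2
  have hK1 : 1 ≤ k.val := by omega
  have hKn : k.val < n := k.isLt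
  set K := k.val with hKdef
  set c' : ℕ → ℕ := fun t => if t = K then c K + 1 else c t with hc'def
  have hc'K : c' K = c K + 1 := by simp [hc'def]
  have hc'other : ∀ t, t ≠ K → c' t = c t := by
    intro t ht; simp [hc'def, ht]
  set g : Fin m := ⟨c K, hckm⟩ with hgdef
  have hgval : g.val = c K := rfl
  have hk'lt : K - 1 < n := by omega
  set k' : Fin n := ⟨K - 1, hk'lt⟩ with hk'def
  have hk'val : k'.val = K - 1 := rfl
  have hkval : k.val = K := rfl
  have hkk' : k ≠ k' := by
    intro h
    have h9 : k.val = k'.val := congrArg Fin.val h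
    rw [hkval, hk'val] at h9
    omega
  have hmonoc := hc.1
  -- h1
  have h1 : ∀ l : Fin n, l ≠ k → l ≠ k' → cb m c' l.val = cb m c l.val := by
    intro l hlk hlk'
    have hv1 : l.val ≠ K := fun h => hlk (Fin.ext h)
    have hv2 : l.val + 1 ≠ K := by
      intro h
      apply hlk'
      apply Fin.ext
      rw [hk'def]
      omega
    unfold cb
    rw [hc'other _ hv1, hc'other _ hv2]
  -- hg
  have hg : g ∈ cb m c k.val := by
    rw [mem_cb]; exact ⟨le_refl _, hkk1⟩
  -- h2
  have h2 : cb m c' k.val = cb m c k.val \ {g} := by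
    ext y
    rw [mem_cb, Finset.mem_sdiff, mem_cb, Finset.mem_singleton]
    have e1 : c' K = c K + 1 := hc'K
    have e2 : c' (K + 1) = c (K + 1) := hc'other _ (by omega)
    rw [← hKdef, e1, e2]
    constructor
    · intro h
      refine ⟨⟨by omega, h.2⟩, ?_⟩
      intro he
      have : y.val = c K := by rw [he]
      omega
    · intro h
      have hy : y.val ≠ c K := by
        intro he
        exact h.2 (Fin.ext he)
      exact ⟨by omega, h.1.2⟩
  -- h3, hg'
  have hK'succ : K - 1 + 1 = K := by omega
  have hg' : g ∉ cb m c k'.val := by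
    rw [mem_cb]
    simp only [hk'def, hK'succ]
    intro h
    have : g.val < c K := h.2
    simp [hgdef] at this
  have h3 : cb m c' k'.val = insert g (cb m c k'.val) := by
    ext y
    rw [mem_cb, Finset.mem_insert, mem_cb]
    have e1 : c' (K - 1) = c (K - 1) := hc'other _ (by omega)
    simp only [hk'def, hK'succ]
    rw [e1, hc'K]
    have hle : c (K - 1) ≤ c K := hmonoc (by omega)
    constructor
    · intro h
      by_cases hy : y.val = c K
      · left; exact Fin.ext hy
      · right; exact ⟨h.1, by omega⟩
    · intro h
      rcases h with h | h
      · have : y.val = c K := by rw [h]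
        omega
      · exact ⟨h.1, by omega⟩
  -- h4
  have h4 : mu n u c < u (cb m c' k.val) := by
    rw [h2]; exact hviol g hg
  -- hdst
  have hdst : dst k'.val istar.val < dst k.val istar.val := by
    rw [hk'val, hkval]
    unfold dst
    omega
  -- validity
  have hval : Valid n m c' := by
    refine ⟨?_, ?_, ?_⟩
    · intro a b hab
      by_cases ha : a = K <;> by_cases hb : b = K
      · subst ha; subst hb; exact le_refl _
      · subst ha
        rw [hc'K, hc'other _ hb]
        have hb' : K + 1 ≤ b := by omega
        have := hmonoc hb'
        omega
      · subst hb
        rw [hc'K, hc'other _ ha]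
        have := hmonoc hab
        omega
      · rw [hc'other _ ha, hc'other _ hb]
        exact hmonoc hab
    · rw [hc'other _ (by omega)]; exact hc.2.1
    · rw [hc'other _ (by omega)]; exact hc.2.2
  exact ⟨c', hval,
    psi_lt_of_move u hmono c c' k k' istar g hkk' h1 hg h2 hg' h3 h4 histar hD hdst⟩

/-- right-push move: the violating bundle `k` is strictly to the left of `istar`. -/
lemma move_right {n m : ℕ} [NeZero n] (u : Finset (Fin m) → ℕ)
    (hmono : ∀ S S', IsIvl S → IsIvl S' → S ⊆ S' → u S ≤ u S')
    (c : ℕ → ℕ) (hc : Valid n m c)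
    (k istar : Fin n) (hik : k.val < istar.val)
    (hknon : (cb m c k.val).Nonempty)
    (hviol : ∀ v ∈ cb m c k.val, mu n u c < u (cb m c k.val \ {v}))
    (histar : istar ∈ mins n u c) (hD : Phi m c istar = DD n m u c) :
    ∃ c'', Valid n m c'' ∧ Psi n u c'' < Psi n u c := by
  classical
  obtain ⟨x, hx⟩ := hknon
  rw [mem_cb] at hx
  have hkk1 : c k.val < c (k.val + 1) := lt_of_le_of_lt hx.1 hx.2
  have hmonoc := hc.1
  have hKn : k.val + 1 < n := by
    have := istar.isLt
    omega
  set K := k.val with hKdef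
  have hcK1m : c (K + 1) ≤ m := by
    have : c (K + 1) ≤ c n := hmonoc (by omega)
    rw [hc.2.2] at this
    exact this
  have hgm : c (K + 1) - 1 < m := by omega
  set c' : ℕ → ℕ := fun t => if t = K + 1 then c (K + 1) - 1 else c t with hc'def
  have hc'K1 : c' (K + 1) = c (K + 1) - 1 := by simp [hc'def]
  have hc'other : ∀ t, t ≠ K + 1 → c' t = c t := by
    intro t ht; simp [hc'def, ht]
  set g : Fin m := ⟨c (K + 1) - 1, hgm⟩ with hgdef
  have hgval : g.val = c (K + 1) - 1 := rfl
  set k' : Fin n := ⟨K + 1, hKn⟩ with hk'def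
  have hk'val : k'.val = K + 1 := rfl
  have hkval : k.val = K := rfl
  have hkk' : k ≠ k' := by
    intro h
    have h9 : k.val = k'.val := congrArg Fin.val h
    rw [hkval, hk'val] at h9
    omega
  have h1 : ∀ l : Fin n, l ≠ k → l ≠ k' → cb m c' l.val = cb m c l.val := by
    intro l hlk hlk'
    have hv1 : l.val ≠ K + 1 := by
      intro h
      apply hlk'
      apply Fin.ext
      rw [hk'def]
      exact h
    have hv2 : l.val + 1 ≠ K + 1 := by
      intro h
      apply hlk
      apply Fin.ext
      omega
    unfold cb
    rw [hc'other _ hv1, hc'other _ hv2]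
  have hg : g ∈ cb m c k.val := by
    rw [mem_cb]
    show c K ≤ c (K + 1) - 1 ∧ c (K + 1) - 1 < c (K + 1)
    omega
  have h2 : cb m c' k.val = cb m c k.val \ {g} := by
    ext y
    rw [mem_cb, Finset.mem_sdiff, mem_cb, Finset.mem_singleton]
    have e1 : c' K = c K := hc'other _ (by omega)
    rw [← hKdef, e1, hc'K1]
    constructor
    · intro h
      refine ⟨⟨h.1, by omega⟩, ?_⟩
      intro he
      have : y.val = c (K + 1) - 1 := by rw [he]
      omega
    · intro h
      have hy : y.val ≠ c (K + 1) - 1 := by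
        intro he
        exact h.2 (Fin.ext he)
      exact ⟨h.1.1, by omega⟩
  have hg' : g ∉ cb m c k'.val := by
    rw [mem_cb]
    simp only [hk'def]
    intro h
    have : c (K + 1) ≤ g.val := h.1
    simp only [hgdef] at this
    omega
  have h3 : cb m c' k'.val = insert g (cb m c k'.val) := by
    ext y
    rw [mem_cb, Finset.mem_insert, mem_cb]
    simp only [hk'def]
    have e2 : c' (K + 1 + 1) = c (K + 1 + 1) := hc'other _ (by omega)
    rw [hc'K1, e2]
    have hle : c (K + 1) ≤ c (K + 1 + 1) := hmonoc (by omega)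
    constructor
    · intro h
      by_cases hy : y.val = c (K + 1) - 1
      · left; exact Fin.ext hy
      · right; exact ⟨by omega, h.2⟩
    · intro h
      rcases h with h | h
      · have : y.val = c (K + 1) - 1 := by rw [h]
        omega
      · exact ⟨by omega, h.2⟩
  have h4 : mu n u c < u (cb m c' k.val) := by
    rw [h2]; exact hviol g hg
  have hdst : dst k'.val istar.val < dst k.val istar.val := by
    rw [hk'val, hkval]
    unfold dst
    omega
  have hval : Valid n m c' := by
    refine ⟨?_, ?_, ?_⟩
    · intro a b hab
      by_cases ha : a = K + 1 <;> by_cases hb : b = K + 1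
      · subst ha; subst hb; exact le_refl _
      · subst ha
        rw [hc'K1, hc'other _ hb]
        have hb' : K + 1 ≤ b := hab
        have := hmonoc hb'
        omega
      · subst hb
        rw [hc'K1, hc'other _ ha]
        have ha' : a ≤ K := by omega
        have := hmonoc ha'
        omega
      · rw [hc'other _ ha, hc'other _ hb]
        exact hmonoc hab
    · rw [hc'other _ (by omega)]; exact hc.2.1
    · rw [hc'other _ (by omega)]; exact hc.2.2
  exact ⟨c', hval,
    psi_lt_of_move u hmono c c' k k' istar g hkk' h1 hg h2 hg' h3 h4 histar hD hdst⟩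

lemma cb_sdiff_first {m : ℕ} (c : ℕ → ℕ) (K : ℕ) (h : c K < m) :
    cb m c K \ {(⟨c K, h⟩ : Fin m)} =
      univ.filter (fun x : Fin m => c K + 1 ≤ x.val ∧ x.val < c (K + 1)) := by
  ext y
  rw [Finset.mem_sdiff, mem_cb, Finset.mem_singleton, Finset.mem_filter]
  constructor
  · intro hy
    have : y.val ≠ c K := by
      intro he
      exact hy.2 (Fin.ext he)
    exact ⟨mem_univ _, by omega, hy.1.2⟩
  · intro hy
    refine ⟨⟨by omega, hy.2.2⟩, ?_⟩
    intro he
    have : y.val = c K := by rw [he]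
    omega

lemma isIvl_filter {m : ℕ} (a b : ℕ) :
    IsIvl ((univ : Finset (Fin m)).filter fun x => a ≤ x.val ∧ x.val < b) := by
  intro p q r hp hr hpq hqr
  simp only [Finset.mem_filter, Finset.mem_univ, true_and] at *
  exact ⟨le_trans hp.1 hpq, lt_of_le_of_lt hqr hr.2⟩

end EQ1Aux

theorem stmt5 {n m : ℕ} (hn : 0 < n) (u : Finset (Fin m) → ℕ)
    (hmono : ∀ S S', IsIvl S → IsIvl S' → S ⊆ S' → u S ≤ u S') (hempty : u ∅ = 0) :
    ∃ A : Alloc n m, A.Complete ∧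
      ∀ i k : Fin n, (A.bundle k).Nonempty →
        ∃ v ∈ A.bundle k, u (A.bundle k \ {v}) ≤ u (A.bundle i) := by
  classical
  haveI : NeZero n := ⟨hn.ne'⟩
  -- existence of a valid cut vector
  have hPex : ∃ t, ∃ c, EQ1Aux.Valid n m c ∧ EQ1Aux.Psi n u c = t := by
    refine ⟨_, fun t => if t = 0 then 0 else m, ⟨?_, ?_, ?_⟩, rfl⟩
    · intro a b hab
      dsimp only
      split_ifs <;> omega
    · simp
    · simp [hn.ne']
  obtain ⟨c, hc, hPsi⟩ := Nat.find_spec hPex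
  -- the minimal cut vector satisfies EQ1
  have hEQ : ∀ i k : Fin n, (EQ1Aux.cb m c k.val).Nonempty →
      ∃ v ∈ EQ1Aux.cb m c k.val,
        u (EQ1Aux.cb m c k.val \ {v}) ≤ u (EQ1Aux.cb m c i.val) := by
    by_contra hno
    push_neg at hno
    obtain ⟨i, k, hknon, hall⟩ := hno
    have hviol : ∀ v ∈ EQ1Aux.cb m c k.val,
        EQ1Aux.mu n u c < u (EQ1Aux.cb m c k.val \ {v}) := by
      intro v hv
      exact lt_of_le_of_lt (EQ1Aux.mu_le n u c i) (hall v hv)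
    obtain ⟨istar, histar, hDeq⟩ :=
      Finset.exists_mem_eq_inf' (EQ1Aux.mins_nonempty n u c) (EQ1Aux.Phi m c)
    have hD : EQ1Aux.Phi m c istar = EQ1Aux.DD n m u c := by
      rw [EQ1Aux.DD, ← hDeq]
    -- bundle k is not a minimum bundle
    have hkmu : EQ1Aux.mu n u c < u (EQ1Aux.cb m c k.val) := by
      obtain ⟨x, hx⟩ := hknon
      have hx' := hx
      rw [EQ1Aux.mem_cb] at hx'
      have hckm : c k.val < m := lt_of_le_of_lt hx'.1 x.isLt
      have hg : (⟨c k.val, hckm⟩ : Fin m) ∈ EQ1Aux.cb m c k.val := by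
        rw [EQ1Aux.mem_cb]
        exact ⟨le_refl _, lt_of_le_of_lt hx'.1 hx'.2⟩
      have h5 := hviol _ hg
      have h6 : u (EQ1Aux.cb m c k.val \ {(⟨c k.val, hckm⟩ : Fin m)})
          ≤ u (EQ1Aux.cb m c k.val) := by
        rw [EQ1Aux.cb_sdiff_first c k.val hckm]
        apply hmono _ _ (EQ1Aux.isIvl_filter _ _) (EQ1Aux.isIvl_cb _ _)
        intro y hy
        rw [Finset.mem_filter] at hy
        rw [EQ1Aux.mem_cb]
        exact ⟨by omega, hy.2.2⟩
      omega
    have hki : k ≠ istar := by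
      intro h
      subst h
      simp only [EQ1Aux.mins, Finset.mem_filter] at histar
      omega
    have hmove : ∃ c'', EQ1Aux.Valid n m c'' ∧ EQ1Aux.Psi n u c'' < EQ1Aux.Psi n u c := by
      rcases lt_trichotomy istar.val k.val with h | h | h
      · exact EQ1Aux.move_left u hmono c hc k istar h hknon hviol histar hD
      · exact absurd (Fin.ext h.symm) hki
      · exact EQ1Aux.move_right u hmono c hc k istar h hknon hviol histar hD
    obtain ⟨c'', hval'', hlt''⟩ := hmove
    have := Nat.find_min hPex (hPsi ▸ hlt'')
    exact this ⟨c'', hval'', rfl⟩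
  -- assemble the allocation
  refine ⟨⟨fun i => EQ1Aux.cb m c i.val, fun i => EQ1Aux.isIvl_cb _ _, ?_⟩, ?_, ?_⟩
  · -- disjointness
    intro i k hik
    rw [Finset.disjoint_left]
    intro x hxi hxk
    rw [EQ1Aux.mem_cb] at hxi hxk
    rcases Nat.lt_or_ge i.val k.val with h | h
    · have := hc.1 (show i.val + 1 ≤ k.val from h)
      omega
    · have hik' : k.val < i.val := by
        rcases Nat.lt_or_ge k.val i.val with h' | h'
        · exact h'
        · exact absurd (Fin.ext (le_antisymm h' h)) hik
      have := hc.1 (show k.val + 1 ≤ i.val from hik')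
      omega
  · -- completeness
    intro v
    have h0 : c 0 = 0 := hc.2.1
    have hcn : c n = m := hc.2.2
    set S : Finset ℕ := (Finset.range (n + 1)).filter (fun t => c t ≤ v.val) with hSdef
    have hS0 : (0 : ℕ) ∈ S := by
      simp [hSdef, h0]
    have hSne : S.Nonempty := ⟨0, hS0⟩
    set j0 := S.max' hSne with hj0def
    have hj0S : j0 ∈ S := S.max'_mem hSne
    have hj0n : j0 ≤ n ∧ c j0 ≤ v.val := by
      rw [hSdef] at hj0S
      simp only [Finset.mem_filter, Finset.mem_range, Nat.lt_succ_iff] at hj0S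
      exact hj0S
    have hj0lt : j0 < n := by
      rcases Nat.lt_or_ge j0 n with h | h
      · exact h
      · exfalso
        have : j0 = n := le_antisymm hj0n.1 h
        rw [this, hcn] at hj0n
        exact absurd hj0n.2 (by omega)
    have hnext : v.val < c (j0 + 1) := by
      by_contra hcon
      push_neg at hcon
      have hmem : j0 + 1 ∈ S := by
        simp only [hSdef, Finset.mem_filter, Finset.mem_range, Nat.lt_succ_iff]
        exact ⟨by omega, hcon⟩
      have := S.le_max' _ hmem
      rw [← hj0def] at this
      omega
    exact ⟨⟨j0, hj0lt⟩, by rw [EQ1Aux.mem_cb]; exact ⟨hj0n.2, hnext⟩⟩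
  · -- EQ1
    intro i k hk
    exact hEQ i k hk
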